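/- Let F be a field with |F| > D and let f ∈ F⟨x₀, x₁⟩ be a nonzero noncommutative polynomial of degree D with t nonzero monomials. Then there exist matrices A₀, A₁ ∈ M_{k+1}(F), where k = ⌈log₂ t⌉, such that f(A₀, A₁) ≠ 0. -/

import Mathlib

noncomputable section

/-- Evaluation of a bivariate noncommutative polynomial `f ∈ F⟨x₀,x₁⟩` at a pair of
matrices, via the `F`-algebra homomorphism `x_b ↦ A b`. -/
def evalMat2 {F : Type*} [Field F] {k : ℕ} (A : Bool → Matrix (Fin k) (Fin k) F) :
    MonoidAlgebra F (FreeMonoid Bool) →ₐ[F] Matrix (Fin k) (Fin k) F :=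
  MonoidAlgebra.lift F _ _ (FreeMonoid.lift A)

namespace SparseAux

open MonoidAlgebra Matrix Polynomial

variable {F : Type*} [Field F]

/-- Abbreviation for the free algebra on two generators. -/
abbrev NCP (F : Type*) [Field F] := MonoidAlgebra F (FreeMonoid Bool)

/-- Evaluation into matrices over any commutative `F`-algebra. -/
def evalM {R : Type*} [CommRing R] [Algebra F R] {ι : Type*} [Fintype ι] [DecidableEq ι]
    (A : Bool → Matrix ι ι R) : NCP F →ₐ[F] Matrix ι ι R :=
  MonoidAlgebra.lift F _ _ (FreeMonoid.lift A)

variable {R S : Type*} [CommRing R] [Algebra F R] [CommRing S] [Algebra F S]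
variable {ι κ : Type*} [Fintype ι] [DecidableEq ι] [Fintype κ] [DecidableEq κ]

lemma evalM_single (A : Bool → Matrix ι ι R) (w : FreeMonoid Bool) (c : F) :
    evalM A (MonoidAlgebra.single w c) = c • FreeMonoid.lift A w :=
  MonoidAlgebra.lift_single _ _ _

lemma evalM_natural (Φ : Matrix ι ι R →ₐ[F] Matrix κ κ S) (A : Bool → Matrix ι ι R)
    (f : NCP F) : Φ (evalM A f) = evalM (fun b => Φ (A b)) f := by
  have h : (Φ.comp (evalM (F := F) A)) = evalM (fun b => Φ (A b)) := by
    apply MonoidAlgebra.algHom_ext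
    intro w
    simp only [AlgHom.comp_apply, evalM_single, one_smul]
    induction w using FreeMonoid.recOn with
    | one => simp
    | of_mul x xs ih => simp [_root_.map_mul, FreeMonoid.lift_eval_of, ih]
    exact Subsingleton.elim _ _
  exact DFunLike.congr_fun h f

lemma coeff_add (f g : NCP F) (w : FreeMonoid Bool) : (f + g).coeff w = f.coeff w + g.coeff w :=
  Finsupp.add_apply f.coeff g.coeff w

lemma cons_injective (b : Bool) :
    Function.Injective (fun w : FreeMonoid Bool => FreeMonoid.of b * w) := by
  intro x y h
  have := congrArg FreeMonoid.toList h
  simpa [FreeMonoid.toList_mul, FreeMonoid.toList_of] using this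

lemma of_mul_ne {b b' : Bool} (h : b ≠ b') (x y : FreeMonoid Bool) :
    FreeMonoid.of b * x ≠ FreeMonoid.of b' * y := by
  intro hh
  have := congrArg FreeMonoid.toList hh
  simp only [FreeMonoid.toList_mul, FreeMonoid.toList_of, List.singleton_append,
    List.cons.injEq] at this
  exact h this.1

lemma of_mul_ne_one (b : Bool) (x : FreeMonoid Bool) : FreeMonoid.of b * x ≠ 1 := by
  intro hh
  have := congrArg FreeMonoid.length hh
  simp [FreeMonoid.length_mul, FreeMonoid.length_of, FreeMonoid.length_one] at this

/-- strip the letter `b` from the front: `(strip b f) w = f (b·w)`. -/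
def strip (b : Bool) (f : NCP F) : NCP F :=
  MonoidAlgebra.ofCoeff
    (Finsupp.comapDomain (fun w => FreeMonoid.of b * w) f.coeff ((cons_injective b).injOn))

@[simp] lemma strip_apply (b : Bool) (f : NCP F) (w : FreeMonoid Bool) :
    (strip b f).coeff w = f.coeff (FreeMonoid.of b * w) := rfl

lemma single_of_mul (b : Bool) (g : NCP F) :
    (MonoidAlgebra.single (FreeMonoid.of b) (1 : F)) * g
      = MonoidAlgebra.ofCoeff (Finsupp.mapDomain (fun w => FreeMonoid.of b * w) g.coeff) := by
  induction g using MonoidAlgebra.induction_linear with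
  | zero => simp
  | add f g hf hg => rw [mul_add, hf, hg, MonoidAlgebra.coeff_add, Finsupp.mapDomain_add, MonoidAlgebra.ofCoeff_add]
  | single a c => rw [MonoidAlgebra.single_mul_single, one_mul, MonoidAlgebra.coeff_single, Finsupp.mapDomain_single, MonoidAlgebra.ofCoeff_single]

lemma decomp (f : NCP F) :
    f = (f.coeff 1) • (1 : NCP F)
      + MonoidAlgebra.single (FreeMonoid.of false) (1 : F) * strip false f
      + MonoidAlgebra.single (FreeMonoid.of true) (1 : F) * strip true f := by
  rw [single_of_mul, single_of_mul]
  ext w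
  have hone : ∀ (b : Bool) (g : NCP F),
      Finsupp.mapDomain (fun w => FreeMonoid.of b * w) g.coeff 1 = 0 := fun b g =>
    Finsupp.mapDomain_notin_range _ _ (by rintro ⟨x, hx⟩; exact of_mul_ne_one b x hx)
  have hsame : ∀ (b : Bool) (g : NCP F) (x : FreeMonoid Bool),
      Finsupp.mapDomain (fun w => FreeMonoid.of b * w) g.coeff (FreeMonoid.of b * x) = g.coeff x :=
    fun b g x => Finsupp.mapDomain_apply (cons_injective b) _ _
  have hdiff : ∀ (b b' : Bool), b ≠ b' → ∀ (g : NCP F) (x : FreeMonoid Bool),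
      Finsupp.mapDomain (fun w => FreeMonoid.of b * w) g.coeff (FreeMonoid.of b' * x) = 0 :=
    fun b b' hbb g x => Finsupp.mapDomain_notin_range _ _
      (by rintro ⟨y, hy⟩; exact of_mul_ne hbb y x hy)
  induction w using FreeMonoid.recOn with
  | one =>
    simp [coeff_add, hone, MonoidAlgebra.one_def, MonoidAlgebra.single_apply]
  | of_mul b x _ =>
    have hx1 : FreeMonoid.of b * x ≠ 1 := of_mul_ne_one b x
    cases b with
    | false =>
      simp [coeff_add, MonoidAlgebra.one_def, MonoidAlgebra.single_apply, Ne.symm hx1,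
        hsame, hdiff true false (by simp)]
    | true =>
      simp [coeff_add, MonoidAlgebra.one_def, MonoidAlgebra.single_apply, Ne.symm hx1,
        hsame, hdiff false true (by simp)]

lemma evalM_decomp (A : Bool → Matrix ι ι R) (f : NCP F) :
    evalM A f = (f.coeff 1) • 1 + A false * evalM A (strip false f)
      + A true * evalM A (strip true f) := by
  have hb : ∀ b, evalM (F := F) A (MonoidAlgebra.single (FreeMonoid.of b) (1 : F)) = A b :=
    fun b => by simp [evalM_single]
  conv_lhs => rw [decomp f]
  rw [_root_.map_add, _root_.map_add, _root_.map_smul, _root_.map_mul, _root_.map_mul, hb, hb,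
    _root_.map_one (evalM (F := F) A)]

lemma eq_zero_of_parts (f : NCP F) (h1 : f.coeff 1 = 0) (h2 : strip false f = 0)
    (h3 : strip true f = 0) : f = 0 := by
  have := decomp f
  rw [h1, h2, h3] at this
  simpa using this

lemma mem_support_strip {b : Bool} {f : NCP F} {w : FreeMonoid Bool} :
    w ∈ (strip b f).coeff.support ↔ FreeMonoid.of b * w ∈ f.coeff.support := by
  simp [Finsupp.mem_support_iff]

lemma length_succ_le {b : Bool} {f : NCP F} {w : FreeMonoid Bool}
    (hw : w ∈ (strip b f).coeff.support) :
    w.length + 1 ≤ f.coeff.support.sup fun w => w.length := by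
  have := Finset.le_sup (f := fun w : FreeMonoid Bool => w.length) (mem_support_strip.mp hw)
  simpa [FreeMonoid.length_mul, FreeMonoid.length_of, Nat.add_comm] using this

lemma card_strip_add (f : NCP F) :
    (strip false f).coeff.support.card + (strip true f).coeff.support.card ≤ f.coeff.support.card := by
  classical
  set i0 := (strip false f).coeff.support.image (fun w => FreeMonoid.of false * w) with hi0
  set i1 := (strip true f).coeff.support.image (fun w => FreeMonoid.of true * w) with hi1
  have hsub : i0 ∪ i1 ⊆ f.coeff.support := by
    intro w hw
    rcases Finset.mem_union.mp hw with hw | hw <;>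
    · obtain ⟨x, hx, rfl⟩ := Finset.mem_image.mp hw
      exact mem_support_strip.mp hx
  have hdisj : Disjoint i0 i1 := by
    rw [Finset.disjoint_left]
    rintro w hw0 hw1
    obtain ⟨x, _, rfl⟩ := Finset.mem_image.mp hw0
    obtain ⟨y, _, hy⟩ := Finset.mem_image.mp hw1
    exact of_mul_ne (by simp) y x hy
  calc (strip false f).coeff.support.card + (strip true f).coeff.support.card
      = i0.card + i1.card := by
        rw [hi0, hi1, Finset.card_image_of_injective _ (cons_injective false),
          Finset.card_image_of_injective _ (cons_injective true)]
    _ = (i0 ∪ i1).card := (Finset.card_union_of_disjoint hdisj).symm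
    _ ≤ f.coeff.support.card := Finset.card_le_card hsub

lemma card_strip_eq (f : NCP F) (b : Bool) (h1 : f.coeff 1 = 0) (h2 : strip (!b) f = 0) :
    (strip b f).coeff.support.card = f.coeff.support.card := by
  classical
  have hd := decomp f
  rw [h1, zero_smul, zero_add] at hd
  have hf : f = MonoidAlgebra.single (FreeMonoid.of b) (1 : F) * strip b f := by
    cases b with
    | false =>
      have h2' : strip true f = 0 := by simpa using h2
      conv_lhs => rw [hd, h2']
      simp
    | true =>
      have h2' : strip false f = 0 := by simpa using h2
      conv_lhs => rw [hd, h2']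
      simp
  conv_rhs => rw [hf, single_of_mul, MonoidAlgebra.coeff_ofCoeff,
    Finsupp.mapDomain_support_of_injective (cons_injective b)]
  rw [Finset.card_image_of_injective _ (cons_injective b)]

lemma matrix_exists_entry {M : Matrix ι ι R} (h : M ≠ 0) : ∃ i j, M i j ≠ 0 := by
  by_contra hc
  push_neg at hc
  exact h (by ext i j; simpa using hc i j)

/-- Corner lemma: evaluation at block-upper-triangular matrices restricts to the corner. -/
lemma evalM_corner {ι' : Type*} [Fintype ι'] [DecidableEq ι']
    (A : Bool → Matrix (Unit ⊕ ι') (Unit ⊕ ι') R) (B : Bool → Matrix ι' ι' R)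
    (hlow : ∀ b i, A b (Sum.inr i) (Sum.inl ()) = 0)
    (hdiag : ∀ b i j, A b (Sum.inr i) (Sum.inr j) = B b i j)
    (f : NCP F) (i j : ι') :
    evalM A f (Sum.inr i) (Sum.inr j) = evalM B f i j := by
  have key : ∀ (w : FreeMonoid Bool) (i j : ι'),
      FreeMonoid.lift A w (Sum.inr i) (Sum.inr j) = FreeMonoid.lift B w i j := by
    intro w
    induction w using FreeMonoid.recOn with
    | one => intro i j; simp [Matrix.one_apply, Sum.inr.injEq]
    | of_mul b w ihw =>
      intro i j
      rw [_root_.map_mul, _root_.map_mul, FreeMonoid.lift_eval_of, FreeMonoid.lift_eval_of,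
        Matrix.mul_apply, Matrix.mul_apply, Fintype.sum_sum_type]
      simp [hlow, hdiag, ihw]
  induction f using MonoidAlgebra.induction_linear with
  | zero => simp
  | add f g hf hg => rw [_root_.map_add, _root_.map_add, Matrix.add_apply, Matrix.add_apply, hf, hg]
  | single w c => simp [evalM_single, key]

/-- Perturbation lemma: if `g` does not vanish at some tuple over an infinite field, then it
does not vanish at some tuple whose `b`-th matrix is invertible. -/
lemma perturb {K : Type*} [Field K] [Algebra F K] [Infinite K]
    (g : NCP F) (b : Bool) (A₀ : Bool → Matrix ι ι K) (hA : evalM A₀ g ≠ 0) :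
    ∃ A : Bool → Matrix ι ι K, IsUnit (A b) ∧ evalM A g ≠ 0 := by
  classical
  set At : Bool → Matrix ι ι (Polynomial K) := fun b' =>
    (A₀ b').map Polynomial.C + if b' = b then (Polynomial.X : K[X]) • 1 else 0 with hAt
  have hmap : ∀ (s : K) (b'),
      ((Polynomial.aeval s : K[X] →ₐ[K] K).restrictScalars F).mapMatrix (At b')
        = A₀ b' + if b' = b then s • 1 else 0 := by
    intro s b'
    ext i j
    by_cases hb' : b' = b
    · by_cases hij : i = j <;>
        simp [hAt, hb', hij, Matrix.one_apply, Matrix.add_apply, Matrix.map_apply,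
          Matrix.smul_apply, smul_eq_mul]
    · simp [hAt, hb', Matrix.add_apply, Matrix.map_apply]
  have h0 : evalM At g ≠ 0 := by
    intro hz
    apply hA
    have hnat := evalM_natural (((Polynomial.aeval (0 : K) : K[X] →ₐ[K] K).restrictScalars
      F).mapMatrix) At g
    rw [hz, map_zero] at hnat
    have hA0 : (fun b' => ((Polynomial.aeval (0 : K) : K[X] →ₐ[K] K).restrictScalars
        F).mapMatrix (At b')) = A₀ := by
      funext b'
      rw [hmap]
      by_cases hb' : b' = b <;> simp [hb']
    rw [hA0] at hnat
    exact hnat.symm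
  obtain ⟨i, j, hij⟩ := matrix_exists_entry h0
  set p : K[X] := evalM At g i j with hp
  have hq : (At b).det ≠ 0 := by
    have hchar : At b = charmatrix (-(A₀ b)) := by
      ext i j
      by_cases hij' : i = j <;>
        simp [hAt, hij', charmatrix_apply, Matrix.add_apply, Matrix.map_apply,
          Matrix.one_apply, Matrix.smul_apply, Matrix.diagonal_apply, sub_eq_add_neg, add_comm]
    rw [hchar]
    exact (Matrix.charpoly_monic (-(A₀ b))).ne_zero
  have hpq : p * (At b).det ≠ 0 := mul_ne_zero hij hq
  obtain ⟨s, hs⟩ : ∃ s : K, Polynomial.eval s (p * (At b).det) ≠ 0 := by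
    by_contra hc
    push_neg at hc
    exact hpq (Polynomial.zero_of_eval_zero _ hc)
  rw [Polynomial.eval_mul] at hs
  have hs1 : Polynomial.eval s p ≠ 0 := fun h => hs (by rw [h, zero_mul])
  have hs2 : Polynomial.eval s (At b).det ≠ 0 := fun h => hs (by rw [h, mul_zero])
  refine ⟨fun b' => A₀ b' + if b' = b then s • 1 else 0, ?_, ?_⟩
  · rw [Matrix.isUnit_iff_isUnit_det, isUnit_iff_ne_zero]
    have : (A₀ b + if b = b then s • (1 : Matrix ι ι K) else 0)
        = (At b).map (Polynomial.aeval s) := by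
      rw [← hmap s b]; rfl
    simp only [if_pos rfl] at this ⊢
    rw [this, Polynomial.coe_aeval_eq_eval, ← Polynomial.coe_evalRingHom,
      ← RingHom.mapMatrix_apply, ← RingHom.map_det]
    simpa using hs2
  · intro hz
    apply hs1
    have hnat := evalM_natural (((Polynomial.aeval s : K[X] →ₐ[K] K).restrictScalars
      F).mapMatrix) At g
    simp only [hmap] at hnat
    rw [hz] at hnat
    have := congrArg (fun M => M i j) hnat
    simpa [hp] using this

/-- Core induction: a nonzero `f` of degree at most `D` with `t` monomials does not vanish
at some tuple of `(⌈log₂ t⌉ + 1)`-size matrices over an infinite field extension. -/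
theorem core (K : Type*) [Field K] [Algebra F K] [Infinite K] (D : ℕ) :
    ∀ f : NCP F, f ≠ 0 → (f.coeff.support.sup fun w => w.length) ≤ D →
    ∀ (ι : Type) (_ : Fintype ι) (_ : DecidableEq ι),
      Nat.clog 2 f.coeff.support.card + 1 ≤ Fintype.card ι →
    ∃ A : Bool → Matrix ι ι K, evalM A f ≠ 0 := by
  induction D using Nat.strong_induction_on with
  | _ D IH =>
  intro f hf hdeg ι hFin hDec hcard
  by_cases hc : f.coeff 1 ≠ 0
  · -- constant term nonzero: take zero matrices
    refine ⟨fun _ => 0, fun h => ?_⟩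
    obtain ⟨i⟩ : Nonempty ι := Fintype.card_pos_iff.mp (by omega)
    rw [evalM_decomp] at h
    simp only [zero_mul, add_zero] at h
    have := congrArg (fun M => M i i) h
    simp only [Matrix.smul_apply, Matrix.one_apply_eq, Matrix.zero_apply,
      Algebra.smul_def, mul_one] at this
    exact hc ((_root_.map_eq_zero (algebraMap F K)).mp this)
  · push_neg at hc
    by_cases h0 : strip false f = 0 <;> by_cases h1 : strip true f = 0
    · exact absurd (eq_zero_of_parts f hc h0 h1) hf
    -- only the `true` part
    · obtain ⟨A₀, hA₀⟩ : ∃ A : Bool → Matrix ι ι K, evalM A (strip true f) ≠ 0 := by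
        obtain ⟨w, hw⟩ := Finsupp.support_nonempty_iff.mpr (mt MonoidAlgebra.coeff_eq_zero.mp h1)
        have hD1 : 1 ≤ D := le_trans (by omega) (le_trans (length_succ_le hw) hdeg)
        refine IH (D - 1) (by omega) _ h1 ?_ ι hFin hDec ?_
        · exact Finset.sup_le fun w hw => by have := le_trans (length_succ_le hw) hdeg; omega
        · rwa [card_strip_eq f true hc (by simpa using h0)]
      obtain ⟨A, hU, hA⟩ := perturb (strip true f) true A₀ hA₀
      refine ⟨A, fun hz => hA ?_⟩
      rw [evalM_decomp, hc, zero_smul, zero_add, h0, map_zero, mul_zero, zero_add] at hz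
      exact (IsUnit.mul_right_eq_zero hU).mp hz
    -- only the `false` part
    · obtain ⟨A₀, hA₀⟩ : ∃ A : Bool → Matrix ι ι K, evalM A (strip false f) ≠ 0 := by
        obtain ⟨w, hw⟩ := Finsupp.support_nonempty_iff.mpr (mt MonoidAlgebra.coeff_eq_zero.mp h0)
        have hD1 : 1 ≤ D := le_trans (by omega) (le_trans (length_succ_le hw) hdeg)
        refine IH (D - 1) (by omega) _ h0 ?_ ι hFin hDec ?_
        · exact Finset.sup_le fun w hw => by have := le_trans (length_succ_le hw) hdeg; omega
        · rwa [card_strip_eq f false hc (by simpa using h1)]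
      obtain ⟨A, hU, hA⟩ := perturb (strip false f) false A₀ hA₀
      refine ⟨A, fun hz => hA ?_⟩
      rw [evalM_decomp, hc, zero_smul, zero_add, h1, map_zero, mul_zero, add_zero] at hz
      exact (IsUnit.mul_right_eq_zero hU).mp hz
    -- both parts nonzero: split construction
    · classical
      set t0 := (strip false f).coeff.support.card with ht0
      set t1 := (strip true f).coeff.support.card with ht1
      have ht0pos : 0 < t0 := Finset.card_pos.mpr (Finsupp.support_nonempty_iff.mpr (mt MonoidAlgebra.coeff_eq_zero.mp h0))
      have ht1pos : 0 < t1 := Finset.card_pos.mpr (Finsupp.support_nonempty_iff.mpr (mt MonoidAlgebra.coeff_eq_zero.mp h1))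
      have hsum : t0 + t1 ≤ f.coeff.support.card := card_strip_add f
      obtain ⟨c, hgne, htc⟩ : ∃ c : Bool, strip c f ≠ 0 ∧
          2 * (strip c f).coeff.support.card ≤ f.coeff.support.card := by
        rcases le_total t0 t1 with hle | hle
        · exact ⟨false, h0, by omega⟩
        · exact ⟨true, h1, by omega⟩
      set g : NCP F := strip c f with hg
      have ht2 : 2 ≤ f.coeff.support.card := by omega
      have hk1 : 1 ≤ Nat.clog 2 f.coeff.support.card := Nat.clog_pos one_lt_two ht2
      have hclog : Nat.clog 2 g.coeff.support.card + 1 ≤ Nat.clog 2 f.coeff.support.card := by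
        have h2 : g.coeff.support.card ≤ 2 ^ (Nat.clog 2 f.coeff.support.card - 1) := by
          have hle : f.coeff.support.card ≤ 2 ^ Nat.clog 2 f.coeff.support.card :=
            Nat.le_pow_clog one_lt_two _
          have : 2 ^ Nat.clog 2 f.coeff.support.card
              = 2 * 2 ^ (Nat.clog 2 f.coeff.support.card - 1) := by
            rw [← pow_succ']
            congr 1
            omega
          omega
        have := (Nat.clog_le_iff_le_pow one_lt_two).mpr h2
        omega
      -- get a witness of size `card ι - 1` for `g`
      set m := Fintype.card ι - 1 with hm
      obtain ⟨w, hw⟩ := Finsupp.support_nonempty_iff.mpr (mt MonoidAlgebra.coeff_eq_zero.mp hgne)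
      have hD1 : 1 ≤ D := le_trans (by omega) (le_trans (length_succ_le hw) hdeg)
      obtain ⟨B, hB⟩ := IH (D - 1) (by omega) g hgne
        (Finset.sup_le fun w hw => by have := le_trans (length_succ_le hw) hdeg; omega)
        (Fin m) inferInstance inferInstance (by simp [hm]; omega)
      obtain ⟨i₀, j₀, hij⟩ := matrix_exists_entry hB
      -- build the block matrices over `Unit ⊕ Fin m`
      set row : Bool → Matrix Unit (Fin m) K := fun b =>
        if b = c then (fun _ j => if j = i₀ then 1 else 0) else 0 with hrow
      set A' : Bool → Matrix (Unit ⊕ Fin m) (Unit ⊕ Fin m) K := fun b =>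
        Matrix.fromBlocks 0 (row b) 0 (B b) with hA'
      have hcorner : ∀ (h : NCP F) i j,
          evalM A' h (Sum.inr i) (Sum.inr j) = evalM B h i j :=
        evalM_corner A' B (fun b i => rfl) (fun b i j => rfl)
      have hA'ne : evalM A' f ≠ 0 := by
        intro hz
        apply hij
        have hentry := congrArg (fun M => M (Sum.inl ()) (Sum.inr j₀)) hz
        rw [evalM_decomp, hc, zero_smul, zero_add] at hentry
        simp only [Matrix.add_apply, Matrix.mul_apply, Matrix.zero_apply] at hentry
        rw [Fintype.sum_sum_type, Fintype.sum_sum_type] at hentry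
        have hblk : ∀ b x, A' b (Sum.inl ()) (Sum.inl x) = 0 := fun b x => rfl
        have hblk2 : ∀ b x, A' b (Sum.inl ()) (Sum.inr x) = row b () x := fun b x => rfl
        simp only [hblk, hblk2, zero_mul, Finset.sum_const_zero, zero_add] at hentry
        -- one of the two sums vanishes (row = 0), the other picks out entry i₀
        have hrc : row c = fun _ j => if j = i₀ then (1 : K) else 0 := by simp [hrow]; congr!
        have hrnc : row (!c) = 0 := by cases c <;> simp [hrow]
        have hcornerg := hcorner g
        cases c with
        | false =>
          simp only [Bool.not_false] at hrnc
          rw [show (row true) = 0 from hrnc] at hentry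
          rw [hrc] at hentry
          simp only [Matrix.zero_apply, zero_mul, Finset.sum_const_zero, add_zero,
            ite_mul, one_mul, zero_mul] at hentry
          rw [Finset.sum_ite_eq' Finset.univ i₀] at hentry
          simp only [Finset.mem_univ, if_pos] at hentry
          rw [← hg, hcornerg i₀ j₀] at hentry
          exact hentry
        | true =>
          simp only [Bool.not_true] at hrnc
          rw [show (row false) = 0 from hrnc] at hentry
          rw [hrc] at hentry
          simp only [Matrix.zero_apply, zero_mul, Finset.sum_const_zero, zero_add,
            ite_mul, one_mul, zero_mul] at hentry
          rw [Finset.sum_ite_eq' Finset.univ i₀] at hentry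
          simp only [Finset.mem_univ, if_pos] at hentry
          rw [← hg, hcornerg i₀ j₀] at hentry
          exact hentry
      -- transfer along an equivalence `Unit ⊕ Fin m ≃ ι`
      have hcards : Fintype.card (Unit ⊕ Fin m) = Fintype.card ι := by
        simp [hm]; omega
      set e : (Unit ⊕ Fin m) ≃ ι := Fintype.equivOfCardEq hcards with he
      set Φ : Matrix (Unit ⊕ Fin m) (Unit ⊕ Fin m) K →ₐ[F] Matrix ι ι K :=
        ((Matrix.reindexAlgEquiv K K e).toAlgHom.restrictScalars F) with hΦ
      refine ⟨fun b => Φ (A' b), fun hz => hA'ne ?_⟩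
      rw [← evalM_natural Φ A' f] at hz
      have : Function.Injective Φ := by
        simp only [hΦ]
        exact (Matrix.reindexAlgEquiv K K e).injective
      exact this (by rw [hz, map_zero])

end SparseAux

section MainProof

open SparseAux MonoidAlgebra Matrix MvPolynomial

variable {F : Type*} [Field F]

/-- grid lemma / Schwartz–Zippel over a possibly finite field. -/
lemma exists_eval_ne {σ : Type} [Fintype σ] {p : MvPolynomial σ F} (hp : p ≠ 0)
    (hd : (p.totalDegree : ℕ∞) < ENat.card F) : ∃ v : σ → F, MvPolynomial.eval v p ≠ 0 := by
  classical
  cases finite_or_infinite F with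
  | inr hinf =>
    by_contra h
    push_neg at h
    exact hp (MvPolynomial.funext fun x => by simpa using h x)
  | inl hfin =>
    haveI : Fintype F := Fintype.ofFinite F
    rw [ENat.card_eq_coe_fintype_card] at hd
    have hd' : p.totalDegree < Fintype.card F := by exact_mod_cast hd
    by_contra h
    push_neg at h
    apply hp
    -- transfer to a polynomial in the same universe as `F`
    let g : σ → ULift.{u_1} σ := fun i => ULift.up i
    have hginj : Function.Injective g := fun a b hab => congrArg ULift.down hab
    have hq : (MvPolynomial.rename g p) = 0 := by
      refine MvPolynomial.eq_zero_of_eval_eq_zero (K := F) (σ := ULift.{u_1} σ)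
        (MvPolynomial.rename g p) (fun v => ?_) ?_
      · rw [MvPolynomial.eval_rename]
        exact h _
      · rw [MvPolynomial.mem_restrictDegree]
        intro s hs i
        have h1 : s i ≤ s.sum fun _ e => e := by
          by_cases hi : i ∈ s.support
          · exact Finset.single_le_sum (f := fun a => s a) (fun _ _ => Nat.zero_le _) hi
          · simp [Finsupp.notMem_support_iff.mp hi]
        have h2 : (s.sum fun _ e => e) ≤ (MvPolynomial.rename g p).totalDegree :=
          MvPolynomial.le_totalDegree hs
        have h3 : (MvPolynomial.rename g p).totalDegree ≤ p.totalDegree :=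
          MvPolynomial.totalDegree_rename_le _ _
        omega
    have := MvPolynomial.rename_injective (R := F) g hginj
    exact this (by rw [hq, map_zero])

/-- The generic matrices. -/
def genX (F : Type*) [Field F] (n : ℕ) :
    Bool → Matrix (Fin n) (Fin n) (MvPolynomial (Bool × Fin n × Fin n) F) := fun b =>
  Matrix.of fun i j => MvPolynomial.X (b, i, j)

lemma totalDegree_word_le {n : ℕ} (w : FreeMonoid Bool) (i j : Fin n) :
    ((FreeMonoid.lift (genX F n) w) i j).totalDegree ≤ w.length := by
  induction w using FreeMonoid.recOn generalizing i j with
  | one =>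
    by_cases hij : i = j <;> simp [Matrix.one_apply, hij]
  | of_mul b w ihw =>
    rw [_root_.map_mul, FreeMonoid.lift_eval_of, Matrix.mul_apply]
    refine le_trans (MvPolynomial.totalDegree_finset_sum _ _) (Finset.sup_le fun l _ => ?_)
    refine le_trans (MvPolynomial.totalDegree_mul _ _) ?_
    have h1 : ((genX F n b) i l).totalDegree ≤ 1 := by
      simp [genX, MvPolynomial.totalDegree_X]
    have := ihw l j
    simp only [FreeMonoid.length_mul, FreeMonoid.length_of]
    omega

lemma totalDegree_evalM_entry_le {n : ℕ} (f : NCP F) (i j : Fin n) :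
    ((evalM (genX F n) f) i j).totalDegree ≤ f.coeff.support.sup fun w => w.length := by
  classical
  have hrw : (evalM (genX F n) f) = f.coeff.sum fun w c => c • FreeMonoid.lift (genX F n) w :=
    MonoidAlgebra.lift_apply _ f
  rw [hrw, Finsupp.sum, Matrix.sum_apply]
  refine le_trans (MvPolynomial.totalDegree_finset_sum _ _) (Finset.sup_le fun w hw => ?_)
  refine le_trans ?_ (Finset.le_sup (f := fun w : FreeMonoid Bool => w.length) hw)
  rw [Matrix.smul_apply]
  exact le_trans (MvPolynomial.totalDegree_smul_le _ _) (totalDegree_word_le w i j)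

lemma evalMat2_eq_evalM {k : ℕ} (A : Bool → Matrix (Fin k) (Fin k) F) :
    evalMat2 A = SparseAux.evalM A := rfl

end MainProof

/-- Bivariate case of the main theorem: if `|F| > D` and `f ∈ F⟨x₀,x₁⟩` is nonzero of
degree `D` with `t` nonzero monomials, then there are matrices
`A₀, A₁ ∈ M_{k+1}(F)`, `k = ⌈log₂ t⌉`, with `f(A₀, A₁) ≠ 0`. -/
theorem bivariate_not_identity {F : Type*} [Field F]
    (f : MonoidAlgebra F (FreeMonoid Bool)) (hf : f ≠ 0)
    (hF : ((f.coeff.support.sup fun w => w.length : ℕ) : ℕ∞) < ENat.card F) :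
    ∃ A : Bool → Matrix (Fin (Nat.clog 2 f.coeff.support.card + 1))
        (Fin (Nat.clog 2 f.coeff.support.card + 1)) F,
      evalMat2 A f ≠ 0 := by
  classical
  open SparseAux MvPolynomial in
  set n := Nat.clog 2 f.coeff.support.card + 1 with hn
  set K := RatFunc F with hK
  haveI : Infinite K := Infinite.of_injective (algebraMap (Polynomial F) K)
    (IsFractionRing.injective (Polynomial F) K)
  obtain ⟨A, hA⟩ := SparseAux.core (F := F) K (f.coeff.support.sup fun w => w.length) f hf le_rfl
    (Fin n) inferInstance inferInstance (by simp [hn])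
  have hgen : evalM (genX F n) f ≠ 0 := by
    intro hz
    apply hA
    have hnat := evalM_natural ((MvPolynomial.aeval
        (fun v : Bool × Fin n × Fin n => A v.1 v.2.1 v.2.2) :
          MvPolynomial (Bool × Fin n × Fin n) F →ₐ[F] K).mapMatrix) (genX F n) f
    rw [hz, map_zero] at hnat
    have heq : (fun b => (MvPolynomial.aeval
        (fun v : Bool × Fin n × Fin n => A v.1 v.2.1 v.2.2) :
          MvPolynomial (Bool × Fin n × Fin n) F →ₐ[F] K).mapMatrix (genX F n b)) = A := by
      funext b
      ext i j
      simp [genX, AlgHom.mapMatrix_apply, Matrix.map_apply]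
    rw [heq] at hnat
    exact hnat.symm
  obtain ⟨i, j, hij⟩ := SparseAux.matrix_exists_entry hgen
  have hdeg := totalDegree_evalM_entry_le f i j
  obtain ⟨v, hv⟩ := exists_eval_ne hij
    (lt_of_le_of_lt (by exact_mod_cast hdeg : (((evalM (genX F n) f) i j).totalDegree : ℕ∞)
      ≤ (f.coeff.support.sup fun w => w.length : ℕ)) hF)
  refine ⟨fun b => (genX F n b).map (MvPolynomial.eval v), fun hz => hv ?_⟩
  rw [evalMat2_eq_evalM] at hz
  have hnat := evalM_natural ((MvPolynomial.aeval v :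
    MvPolynomial (Bool × Fin n × Fin n) F →ₐ[F] F).mapMatrix) (genX F n) f
  have heq : (fun b => (MvPolynomial.aeval v :
      MvPolynomial (Bool × Fin n × Fin n) F →ₐ[F] F).mapMatrix (genX F n b))
      = fun b => (genX F n b).map (MvPolynomial.eval v) := by
    funext b
    ext i' j'
    simp [genX, AlgHom.mapMatrix_apply, Matrix.map_apply]
  rw [heq, hz] at hnat
  have := congrArg (fun M => M i j) hnat
  have hae : ∀ p : MvPolynomial (Bool × Fin n × Fin n) F,
      MvPolynomial.aeval v p = MvPolynomial.eval v p := fun p => by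
    rw [← MvPolynomial.coe_aeval_eq_eval]; rfl
  simpa [AlgHom.mapMatrix_apply, Matrix.map_apply, hae] using this

end
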